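/- Let n ≥ 1 and let a be a nonzero complex number. Then the polynomial q(z) = Σ_{k=0}^n (−1)^{k(k+1)/2} · C(n,k) · a^k · z^{n−k} (the dual of (z+a)^n) has exactly the n roots μ_k = (−1)^{n−1} a · tan(π(4k+1)/(4n)) for k = 1, …, n, and these n values are pairwise distinct; in particular, when a is a positive real number, q has n distinct real roots. -/

import Mathlib

open Polynomial

/-- The roots `μ_k = (-1)^{n-1} a · tan(π(4k+1)/(4n))`, `k = 1, …, n`, of the dual of
`(z+a)^n`. -/
noncomputable def dualBinomialRoot (n : ℕ) (a : ℂ) (k : ℕ) : ℂ :=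
  (-1 : ℂ) ^ (n - 1) * a *
    (Real.tan (Real.pi * (4 * (k : ℝ) + 1) / (4 * (n : ℝ))) : ℂ)

open Complex

lemma eps_eq (k : ℕ) :
    ((-1 : ℂ)) ^ (k * (k + 1) / 2) = ((1 + I) * I ^ k + (1 - I) * (-I) ^ k) / 2 := by
  induction k using Nat.strong_induction_on with
  | _ k ih =>
    match k with
    | 0 => norm_num
    | 1 => norm_num [Complex.ext_iff]
    | 2 => norm_num [pow_succ, Complex.ext_iff]
    | 3 => norm_num [pow_succ, Complex.ext_iff]
    | (m+4) =>
      have h2 : (m+4) * (m+4+1) / 2 = m * (m+1) / 2 + (4*m+10) := by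
        have h : (m+4) * (m+4+1) = m * (m+1) + 2 * (4*m+10) := by ring
        rw [h, Nat.add_mul_div_left _ _ (by norm_num)]
      have hI4 : (I:ℂ)^(4:ℕ) = 1 := by
        norm_num [show (4:ℕ) = 2*2 from rfl, pow_mul, Complex.I_sq]
      have hnI4 : ((-I):ℂ)^(4:ℕ) = 1 := by
        rw [show ((-I):ℂ)^(4:ℕ) = I^(4:ℕ) by ring, hI4]
      rw [h2, pow_add, show (4*m+10) = 2*(2*m+5) from by ring, pow_mul]
      norm_num
      rw [show m+4 = m+4 from rfl, pow_add, pow_add, hI4, hnI4, mul_one, mul_one]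
      exact ih m (by omega)

lemma eval_q (n : ℕ) (a z : ℂ) :
    Polynomial.eval z (∑ k ∈ Finset.range (n + 1),
        Polynomial.C ((-1 : ℂ) ^ (k * (k + 1) / 2) * (n.choose k : ℂ) * a ^ k) *
          Polynomial.X ^ (n - k)) =
    ((1 + I) * (z + I * a) ^ n + (1 - I) * (z - I * a) ^ n) / 2 := by
  rw [eval_finset_sum]
  have h1 : (z + I*a)^n = ∑ k ∈ Finset.range (n+1), (I*a)^k * z^(n-k) * (n.choose k) := by
    rw [add_comm z (I*a), add_pow]
  have h2 : (z - I*a)^n = ∑ k ∈ Finset.range (n+1), (-(I*a))^k * z^(n-k) * (n.choose k) := by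
    rw [sub_eq_add_neg, add_comm z (-(I*a)), add_pow]
  rw [h1, h2, Finset.mul_sum, Finset.mul_sum, ← Finset.sum_add_distrib, Finset.sum_div]
  refine Finset.sum_congr rfl fun k hk => ?_
  simp only [eval_mul, eval_C, eval_pow, eval_X]
  rw [eps_eq k, show (-(I*a)) = (-I)*a from by ring, mul_pow, mul_pow]
  ring

lemma cos_ne (n k : ℕ) (hn : 1 ≤ n) :
    Real.cos (Real.pi * (4 * (k:ℝ) + 1) / (4 * (n:ℝ))) ≠ 0 := by
  intro h
  rw [Real.cos_eq_zero_iff] at h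
  obtain ⟨m, hm⟩ := h
  have hπ := Real.pi_ne_zero
  have hn' : (n:ℝ) ≠ 0 := Nat.cast_ne_zero.mpr (by omega)
  field_simp at hm
  have h2 : Real.pi * ((4*(k:ℝ)+1)*2) = Real.pi * ((2*(m:ℝ)+1)*(4*(n:ℝ))) := by
    linear_combination Real.pi * hm
  have key : (4*(k:ℝ)+1)*2 = (2*(m:ℝ)+1)*(4*(n:ℝ)) := mul_left_cancel₀ hπ h2
  have keyz : (4*(k:ℤ)+1)*2 = (2*m+1)*(4*(n:ℤ)) := by exact_mod_cast key
  have hdvd : (4:ℤ) ∣ (4*(k:ℤ)+1)*2 := ⟨(2*m+1)*(n:ℤ), by linarith⟩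
  omega

lemma mu_inj (n : ℕ) (hn : 1 ≤ n) {k1 k2 : ℕ} (h1 : k1 ∈ Finset.Icc 1 n) (h2 : k2 ∈ Finset.Icc 1 n)
    (h : Real.tan (Real.pi * (4*(k1:ℝ)+1)/(4*(n:ℝ))) = Real.tan (Real.pi * (4*(k2:ℝ)+1)/(4*(n:ℝ)))) :
    k1 = k2 := by
  have hc1 := cos_ne n k1 hn
  have hc2 := cos_ne n k2 hn
  rw [Real.tan_eq_sin_div_cos, Real.tan_eq_sin_div_cos, div_eq_div_iff hc1 hc2] at h
  have hs : Real.sin (Real.pi * (4*(k1:ℝ)+1)/(4*(n:ℝ)) - Real.pi * (4*(k2:ℝ)+1)/(4*(n:ℝ))) = 0 := by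
    rw [Real.sin_sub]; linarith
  rw [Real.sin_eq_zero_iff] at hs
  obtain ⟨m, hm⟩ := hs
  have hπ := Real.pi_ne_zero
  have hn' : (n:ℝ) ≠ 0 := Nat.cast_ne_zero.mpr (by omega)
  field_simp at hm
  have h2' : Real.pi * ((m:ℝ)*(4*(n:ℝ))) = Real.pi * (4*(k1:ℝ) - 4*(k2:ℝ)) := by
    linear_combination Real.pi * hm
  have key : (m:ℝ)*(4*(n:ℝ)) = 4*(k1:ℝ) - 4*(k2:ℝ) := mul_left_cancel₀ hπ h2'
  have keyz : m*(4*(n:ℤ)) = 4*(k1:ℤ) - 4*(k2:ℤ) := by exact_mod_cast key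
  have hb1 := Finset.mem_Icc.mp h1
  have hb2 := Finset.mem_Icc.mp h2
  rcases lt_trichotomy m 0 with h'|h'|h'
  · have hle : m*(4*(n:ℤ)) ≤ -1*(4*(n:ℤ)) :=
      mul_le_mul_of_nonneg_right (by omega) (by positivity)
    rw [keyz] at hle; omega
  · rw [h'] at keyz; omega
  · have hle : 1*(4*(n:ℤ)) ≤ m*(4*(n:ℤ)) :=
      mul_le_mul_of_nonneg_right (by omega) (by positivity)
    rw [keyz] at hle; omega

lemma root_eq (n : ℕ) (hn : 1 ≤ n) (a : ℂ) (k : ℕ) :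
    (1 + I) * (dualBinomialRoot n a k + I * a) ^ n
      + (1 - I) * (dualBinomialRoot n a k - I * a) ^ n = 0 := by
  have hc : Real.cos (Real.pi * (4 * (k:ℝ) + 1) / (4 * (n:ℝ))) ≠ 0 := cos_ne n k hn
  set θ : ℝ := Real.pi * (4 * (k:ℝ) + 1) / (4 * (n:ℝ)) with hθdef
  have hcC : (Real.cos θ : ℂ) ≠ 0 := by exact_mod_cast hc
  have htan : (Real.tan θ : ℂ) = (Real.sin θ : ℂ) / (Real.cos θ : ℂ) := by
    rw [Real.tan_eq_sin_div_cos]; push_cast; ring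
  have hn' : (n:ℝ) ≠ 0 := Nat.cast_ne_zero.mpr (by omega)
  have hnθ : (n:ℝ) * θ = Real.pi * k + Real.pi/4 := by
    rw [hθdef]; field_simp
  have hcosk : Real.cos (Real.pi * k) = (-1)^k := by
    have := Real.cos_add_nat_mul_pi 0 k
    simpa [mul_comm] using this
  have hsink : Real.sin (Real.pi * k) = 0 := by
    have := Real.sin_nat_mul_pi k
    simpa [mul_comm] using this
  have hek : Complex.exp (((Real.pi * k + Real.pi/4 : ℝ) : ℂ) * I)
      = (-1)^k * (((Real.sqrt 2 / 2 : ℝ) : ℂ) * (1 + I)) := by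
    rw [Complex.exp_mul_I, ← Complex.ofReal_cos, ← Complex.ofReal_sin,
      Real.cos_add, Real.sin_add, hcosk, hsink, Real.cos_pi_div_four, Real.sin_pi_div_four]
    push_cast; ring
  have hek' : Complex.exp (((-(Real.pi * k + Real.pi/4) : ℝ) : ℂ) * I)
      = (-1)^k * (((Real.sqrt 2 / 2 : ℝ) : ℂ) * (1 - I)) := by
    rw [Complex.exp_mul_I, ← Complex.ofReal_cos, ← Complex.ofReal_sin,
      Real.cos_neg, Real.sin_neg,
      Real.cos_add, Real.sin_add, hcosk, hsink, Real.cos_pi_div_four, Real.sin_pi_div_four]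
    push_cast; ring
  have hE : Complex.exp ((θ:ℂ) * I) = (Real.cos θ : ℂ) + (Real.sin θ : ℂ) * I := by
    rw [Complex.exp_mul_I, ← Complex.ofReal_cos, ← Complex.ofReal_sin]
  have hE' : Complex.exp (-(θ:ℂ) * I) = (Real.cos θ : ℂ) - (Real.sin θ : ℂ) * I := by
    rw [show -(θ:ℂ) * I = ((-θ : ℝ) : ℂ) * I by push_cast; ring, Complex.exp_mul_I,
      ← Complex.ofReal_cos, ← Complex.ofReal_sin, Real.cos_neg, Real.sin_neg]
    push_cast; ring
  have hEn : Complex.exp ((θ:ℂ) * I) ^ n = (-1)^k * (((Real.sqrt 2 / 2 : ℝ) : ℂ) * (1 + I)) := by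
    rw [← Complex.exp_nat_mul, show (n:ℂ) * ((θ:ℂ) * I) = ((Real.pi * k + Real.pi/4 : ℝ) : ℂ) * I by
      rw [← hnθ]; push_cast; ring, hek]
  have hEn' : Complex.exp (-(θ:ℂ) * I) ^ n
      = (-1)^k * (((Real.sqrt 2 / 2 : ℝ) : ℂ) * (1 - I)) := by
    rw [← Complex.exp_nat_mul, show (n:ℂ) * (-(θ:ℂ) * I) = ((-(Real.pi * k + Real.pi/4) : ℝ) : ℂ) * I by
      push_cast [← hnθ]; ring, hek']
  rcases Nat.even_or_odd n with hpar | hpar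
  · -- n even
    obtain ⟨t, ht⟩ := hpar
    have hsign : ((-1:ℂ))^(n-1) = -1 := Odd.neg_one_pow ⟨t-1, by omega⟩
    have h1 : dualBinomialRoot n a k + I * a
        = (a / (Real.cos θ : ℂ)) * (I * Complex.exp ((θ:ℂ) * I)) := by
      rw [dualBinomialRoot, hsign, ← hθdef, htan, hE]
      set s := ((Real.sin θ : ℝ) : ℂ) with hsdef
      set c := ((Real.cos θ : ℝ) : ℂ) with hcdef
      field_simp
      linear_combination (-(a*s)) * Complex.I_sq
    have h2 : dualBinomialRoot n a k - I * a
        = (a / (Real.cos θ : ℂ)) * (-I * Complex.exp (-(θ:ℂ) * I)) := by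
      rw [dualBinomialRoot, hsign, ← hθdef, htan, hE']
      set s := ((Real.sin θ : ℝ) : ℂ) with hsdef
      set c := ((Real.cos θ : ℝ) : ℂ) with hcdef
      field_simp
      linear_combination (-(a*s)) * Complex.I_sq
    have hIn : ((-I):ℂ)^n = I^n := Even.neg_pow ⟨t, ht⟩ I
    rw [h1, h2, mul_pow, mul_pow, mul_pow, mul_pow, hEn, hEn', hIn]
    linear_combination ((a / (Real.cos θ : ℂ))^n * I^n * (-1:ℂ)^k
      * ((Real.sqrt 2 / 2 : ℝ) : ℂ) * 2) * Complex.I_sq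
  · -- n odd
    obtain ⟨t, ht⟩ := hpar
    have hsign : ((-1:ℂ))^(n-1) = 1 := Even.neg_one_pow ⟨t, by omega⟩
    have h1 : dualBinomialRoot n a k + I * a
        = (a / (Real.cos θ : ℂ)) * (I * Complex.exp (-(θ:ℂ) * I)) := by
      rw [dualBinomialRoot, hsign, ← hθdef, htan, hE']
      set s := ((Real.sin θ : ℝ) : ℂ) with hsdef
      set c := ((Real.cos θ : ℝ) : ℂ) with hcdef
      field_simp
      linear_combination (a*s) * Complex.I_sq
    have h2 : dualBinomialRoot n a k - I * a
        = (a / (Real.cos θ : ℂ)) * (-I * Complex.exp ((θ:ℂ) * I)) := by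
      rw [dualBinomialRoot, hsign, ← hθdef, htan, hE]
      set s := ((Real.sin θ : ℝ) : ℂ) with hsdef
      set c := ((Real.cos θ : ℝ) : ℂ) with hcdef
      field_simp
      linear_combination (a*s) * Complex.I_sq
    have hIn : ((-I):ℂ)^n = -I^n := Odd.neg_pow ⟨t, ht⟩ I
    rw [h1, h2, mul_pow, mul_pow, mul_pow, mul_pow, hEn, hEn', hIn]
    ring

/-- For `n ≥ 1` and `a ≠ 0`, the polynomial
`q(z) = Σ_{k=0}^n (-1)^{k(k+1)/2} C(n,k) a^k z^{n-k}` (the dual of `(z+a)^n`) has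
exactly the `n` pairwise distinct roots `μ_k = (-1)^{n-1} a·tan(π(4k+1)/(4n))`,
`k = 1, …, n`; in particular, if `a` is a positive real number, these are `n` distinct
real roots. -/
theorem dual_of_binomial_roots (n : ℕ) (hn : 1 ≤ n) (a : ℂ) (ha : a ≠ 0) :
    (∀ k1 ∈ Finset.Icc 1 n, ∀ k2 ∈ Finset.Icc 1 n,
        dualBinomialRoot n a k1 = dualBinomialRoot n a k2 → k1 = k2) ∧
    (∀ z : ℂ,
        Polynomial.eval z (∑ k ∈ Finset.range (n + 1),
            Polynomial.C ((-1 : ℂ) ^ (k * (k + 1) / 2) * (n.choose k : ℂ) * a ^ k) *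
              Polynomial.X ^ (n - k)) = 0 ↔
          ∃ k ∈ Finset.Icc 1 n, z = dualBinomialRoot n a k) ∧
    (a.im = 0 ∧ 0 < a.re → ∀ k ∈ Finset.Icc 1 n, (dualBinomialRoot n a k).im = 0) := by
  have inj : ∀ k1 ∈ Finset.Icc 1 n, ∀ k2 ∈ Finset.Icc 1 n,
      dualBinomialRoot n a k1 = dualBinomialRoot n a k2 → k1 = k2 := by
    intro k1 h1 k2 h2 h
    have hc : ((-1:ℂ))^(n-1) * a ≠ 0 := mul_ne_zero (pow_ne_zero _ (by norm_num)) ha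
    rw [dualBinomialRoot, dualBinomialRoot] at h
    have ht : (Real.tan (Real.pi * (4*(k1:ℝ)+1)/(4*(n:ℝ))) : ℂ)
        = (Real.tan (Real.pi * (4*(k2:ℝ)+1)/(4*(n:ℝ))) : ℂ) := mul_left_cancel₀ hc h
    exact mu_inj n hn h1 h2 (by exact_mod_cast ht)
  set q : Polynomial ℂ := ∑ k ∈ Finset.range (n + 1),
      Polynomial.C ((-1 : ℂ) ^ (k * (k + 1) / 2) * (n.choose k : ℂ) * a ^ k) *
        Polynomial.X ^ (n - k) with hqdef
  have hcoeff : q.coeff n = 1 := by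
    rw [hqdef, Polynomial.finset_sum_coeff, Finset.sum_eq_single 0]
    · simp
    · intro b hb hb0
      have hbn := Finset.mem_range.mp hb
      rw [Polynomial.coeff_C_mul, Polynomial.coeff_X_pow, if_neg (by omega), mul_zero]
    · intro h
      exact absurd (Finset.mem_range.mpr (by omega)) h
  have hq0 : q ≠ 0 := fun h => by simp [h] at hcoeff
  have hdeg : q.natDegree ≤ n := by
    rw [hqdef]
    refine Polynomial.natDegree_sum_le_of_forall_le _ _ fun i hi => ?_
    refine le_trans (Polynomial.natDegree_C_mul_le _ _) ?_
    rw [Polynomial.natDegree_X_pow]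
    omega
  have hroot : ∀ k : ℕ, Polynomial.IsRoot q (dualBinomialRoot n a k) := by
    intro k
    show Polynomial.eval _ q = 0
    rw [hqdef, eval_q, root_eq n hn a k, zero_div]
  set M : Multiset ℂ := (Finset.Icc 1 n).val.map (dualBinomialRoot n a) with hMdef
  have hnodup : M.Nodup :=
    Multiset.Nodup.map_on (fun x hx y hy hxy => inj x hx y hy hxy) (Finset.Icc 1 n).nodup
  have hle : M ≤ q.roots := by
    refine (Multiset.le_iff_subset hnodup).mpr ?_
    intro x hx
    obtain ⟨k, hk, rfl⟩ := Multiset.mem_map.mp hx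
    exact (Polynomial.mem_roots hq0).mpr (hroot k)
  have hcardM : Multiset.card M = n := by
    rw [hMdef, Multiset.card_map]
    rw [← Finset.card_def, Nat.card_Icc]
    omega
  have hcards : Multiset.card q.roots ≤ n := le_trans (Polynomial.card_roots' q) hdeg
  have hMeq : M = q.roots :=
    Multiset.eq_of_le_of_card_le hle (by rw [hcardM]; exact hcards)
  refine ⟨inj, fun z => ?_, ?_⟩
  · constructor
    · intro hz
      have hzr : z ∈ q.roots := (Polynomial.mem_roots hq0).mpr hz
      rw [← hMeq] at hzr
      obtain ⟨k, hk, he⟩ := Multiset.mem_map.mp hzr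
      exact ⟨k, hk, he.symm⟩
    · rintro ⟨k, hk, rfl⟩
      exact hroot k
  · rintro ⟨him, -⟩ k hk
    obtain ⟨r, rfl⟩ : ∃ r : ℝ, a = (r:ℂ) := ⟨a.re, by apply Complex.ext <;> simp [him]⟩
    rw [dualBinomialRoot,
      show ((-1:ℂ))^(n-1) * (r:ℂ) * ((Real.tan (Real.pi * (4 * (k:ℝ) + 1) / (4 * (n:ℝ))) : ℝ) : ℂ)
        = ((((-1:ℝ))^(n-1) * r * Real.tan (Real.pi * (4 * (k:ℝ) + 1) / (4 * (n:ℝ))) : ℝ) : ℂ) by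
      push_cast; ring]
    exact Complex.ofReal_im _
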